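/- arXiv:2403.12303 — 2 statements merged into one kernel-verified Lean document; each statement's English description precedes it below -/
import Mathlib

section
/- Let Γ be a finite family of pseudo-lines (continuous functions ℝ → ℝ, pairwise intersecting at most once) partitioned into subsets Γ₁, …, Γᵣ. Say a point q = (x, y) crosses Γᵢ if some f ∈ Γᵢ has f(x) > y and some g ∈ Γᵢ has g(x) < y. Let Δ be a region of the plane with four designated 'vertices' v_TL, v_BL, v_TR, v_BR such that Δ is bounded above by a sub-arc of one pseudo-line from v_TL to v_TR and below by a sub-arc of another from v_BL to v_BR (both not in Γ, but pairwise intersecting each member of Γ at most once). Suppose q ∈ Δ and none of the four vertices crosses Γᵢ, and suppose not all members of Γᵢ intersect the closure of Δ. Then q does not cross Γᵢ. -/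
/-- A point `(x, y)` crosses a family `S` of pseudo-lines if some member is strictly
above it and some member is strictly below it. -/
def PtCrosses (S : Set (ℝ → ℝ)) (x y : ℝ) : Prop :=
  (∃ f ∈ S, f x > y) ∧ (∃ g ∈ S, g x < y)

/-- Let `Δ` be the pseudo-trapezoid bounded above by the pseudo-line `u`
and below by the pseudo-line `ℓ` over `[a, b]`. If none of the four vertices of `Δ`
crosses the subfamily `Γi`, and not every member of `Γi` intersects `Δ`, then no point
`q = (x₀, y₀)` of `Δ` crosses `Γi`. -/
theorem stmt_3 (Γi : Set (ℝ → ℝ)) (u ℓ : ℝ → ℝ) (a b : ℝ) (hab : a < b)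
    (hu : Continuous u) (hl : Continuous ℓ)
    (hul : ∀ x ∈ Set.Icc a b, ℓ x ≤ u x)
    (hcont : ∀ f ∈ Γi, Continuous f)
    (hfu : ∀ f ∈ Γi, {x : ℝ | f x = u x}.Subsingleton)
    (hfl : ∀ f ∈ Γi, {x : ℝ | f x = ℓ x}.Subsingleton)
    (hpair : ∀ f ∈ Γi, ∀ g ∈ Γi, f ≠ g → {x : ℝ | f x = g x}.Subsingleton)
    (hTL : ¬ PtCrosses Γi a (u a)) (hBL : ¬ PtCrosses Γi a (ℓ a))
    (hTR : ¬ PtCrosses Γi b (u b)) (hBR : ¬ PtCrosses Γi b (ℓ b))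
    (hNotAll : ∃ f ∈ Γi, ∀ x ∈ Set.Icc a b, ¬ (ℓ x ≤ f x ∧ f x ≤ u x))
    (x₀ y₀ : ℝ) (hx : x₀ ∈ Set.Icc a b) (hy : ℓ x₀ ≤ y₀ ∧ y₀ ≤ u x₀) :
    ¬ PtCrosses Γi x₀ y₀ := by
  intro hcross
  obtain ⟨f, hf, hfΔ⟩ := hNotAll
  obtain ⟨hxa, hxb⟩ := hx
  have hfc := hcont f hf
  -- f lies entirely above u or entirely below ℓ on [a, b]
  have hdich : (∀ x ∈ Set.Icc a b, u x < f x) ∨ (∀ x ∈ Set.Icc a b, f x < ℓ x) := by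
    by_contra h
    push_neg at h
    obtain ⟨⟨x₁, hx1, hx1'⟩, ⟨x₂, hx2, hx2'⟩⟩ := h
    have h1 : f x₁ < ℓ x₁ := by
      rcases lt_or_ge (f x₁) (ℓ x₁) with h' | h'
      · exact h'
      · exact absurd ⟨h', hx1'⟩ (hfΔ x₁ hx1)
    have h2 : u x₂ < f x₂ := by
      rcases lt_or_ge (u x₂) (f x₂) with h' | h'
      · exact h'
      · exact absurd ⟨hx2', h'⟩ (hfΔ x₂ hx2)
    have h2' : ℓ x₂ < f x₂ := lt_of_le_of_lt (hul x₂ hx2) h2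
    have hcont' : Continuous (fun x => f x - ℓ x) := hfc.sub hl
    have h0 : (0 : ℝ) ∈ Set.uIcc ((fun x => f x - ℓ x) x₁) ((fun x => f x - ℓ x) x₂) := by
      rw [Set.mem_uIcc]
      left
      constructor <;> simp <;> linarith
    obtain ⟨z, hz, hz0⟩ := intermediate_value_uIcc hcont'.continuousOn h0
    have hzab : z ∈ Set.Icc a b := by
      have : Set.uIcc x₁ x₂ ⊆ Set.Icc a b := Set.uIcc_subset_Icc hx1 hx2
      exact this hz
    have hfz : f z = ℓ z := sub_eq_zero.mp (by simpa using hz0)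
    exact hfΔ z hzab ⟨le_of_eq hfz.symm, hfz ▸ hul z hzab⟩
  rcases hdich with habove | hbelow
  · -- f is above u everywhere; crossing point gives g below, which must cross u twice
    obtain ⟨g, hg, hgx⟩ := hcross.2
    have hgx' : g x₀ < u x₀ := lt_of_lt_of_le hgx hy.2
    have hga : u a ≤ g a := by
      by_contra hlt
      push_neg at hlt
      exact hTL ⟨⟨f, hf, habove a ⟨le_refl a, le_of_lt hab⟩⟩, ⟨g, hg, hlt⟩⟩
    have hgb : u b ≤ g b := by
      by_contra hlt
      push_neg at hlt
      exact hTR ⟨⟨f, hf, habove b ⟨le_of_lt hab, le_refl b⟩⟩, ⟨g, hg, hlt⟩⟩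
    have hgc : Continuous (fun x => g x - u x) := (hcont g hg).sub hu
    have h0p : (0 : ℝ) ∈ Set.Icc ((fun x => g x - u x) x₀) ((fun x => g x - u x) a) := by
      constructor <;> simp <;> linarith
    obtain ⟨p, hp, hp0⟩ := intermediate_value_Icc' hxa hgc.continuousOn h0p
    have h0q : (0 : ℝ) ∈ Set.Icc ((fun x => g x - u x) x₀) ((fun x => g x - u x) b) := by
      constructor <;> simp <;> linarith
    obtain ⟨q, hq, hq0⟩ := intermediate_value_Icc hxb hgc.continuousOn h0q
    have hpeq : g p = u p := by simpa [sub_eq_zero] using hp0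
    have hqeq : g q = u q := by simpa [sub_eq_zero] using hq0
    have hpne : p ≠ x₀ := by
      intro h; rw [h] at hpeq; linarith
    have hqne : q ≠ x₀ := by
      intro h; rw [h] at hqeq; linarith
    have : p = q := hfu g hg hpeq hqeq
    have hplt : p < x₀ := lt_of_le_of_ne hp.2 hpne
    have hqgt : x₀ < q := lt_of_le_of_ne hq.1 (Ne.symm hqne)
    linarith [this ▸ hqgt]
  · -- f is below ℓ everywhere; crossing point gives g above, which must cross ℓ twice
    obtain ⟨g, hg, hgx⟩ := hcross.1
    have hgx' : ℓ x₀ < g x₀ := lt_of_le_of_lt hy.1 hgx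
    have hga : g a ≤ ℓ a := by
      by_contra hlt
      push_neg at hlt
      exact hBL ⟨⟨g, hg, hlt⟩, ⟨f, hf, hbelow a ⟨le_refl a, le_of_lt hab⟩⟩⟩
    have hgb : g b ≤ ℓ b := by
      by_contra hlt
      push_neg at hlt
      exact hBR ⟨⟨g, hg, hlt⟩, ⟨f, hf, hbelow b ⟨le_of_lt hab, le_refl b⟩⟩⟩
    have hgc : Continuous (fun x => g x - ℓ x) := (hcont g hg).sub hl
    have h0p : (0 : ℝ) ∈ Set.Icc ((fun x => g x - ℓ x) a) ((fun x => g x - ℓ x) x₀) := by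
      constructor <;> simp <;> linarith
    obtain ⟨p, hp, hp0⟩ := intermediate_value_Icc hxa hgc.continuousOn h0p
    have h0q : (0 : ℝ) ∈ Set.Icc ((fun x => g x - ℓ x) b) ((fun x => g x - ℓ x) x₀) := by
      constructor <;> simp <;> linarith
    obtain ⟨q, hq, hq0⟩ := intermediate_value_Icc' hxb hgc.continuousOn h0q
    have hpeq : g p = ℓ p := by simpa [sub_eq_zero] using hp0
    have hqeq : g q = ℓ q := by simpa [sub_eq_zero] using hq0
    have hpne : p ≠ x₀ := by
      intro h; rw [h] at hpeq; linarith
    have hqne : q ≠ x₀ := by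
      intro h; rw [h] at hqeq; linarith
    have : p = q := hfl g hg hpeq hqeq
    have hplt : p < x₀ := lt_of_le_of_ne hp.2 hpne
    have hqgt : x₀ < q := lt_of_le_of_ne hq.1 (Ne.symm hqne)
    linarith [this ▸ hqgt]
end

section
/- Let F be a family of functions ℝ → ℝ such that any two distinct members of F agree at most once (equal at most one point). Then for any finite set M of t points in the plane, the number of equivalence classes of F under the relation 'f ~ g iff for every (x,y) ∈ M, (f(x) > y ↔ g(x) > y) and (f(x) < y ↔ g(x) < y)' is at most O(t²); concretely, at most C·t² for an absolute constant C (e.g., C can be taken so the bound is 1 + t + t(t-1), i.e., at most t² + 1 classes via a VC-dimension/arrangement argument). -/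
open Finset

private lemma stmt8_ivt {f g : ℝ → ℝ} (hf : Continuous f) (hg : Continuous g)
    (hsub : {x : ℝ | f x = g x}.Subsingleton) {a b c : ℝ} (hab : a ≤ b) (hbc : b ≤ c)
    (h1 : g a < f a) (h2 : f b < g b) (h3 : g c < f c) : False := by
  have hcont : Continuous (fun x => f x - g x) := hf.sub hg
  have i1 : (0 : ℝ) ∈ Set.Icc (f b - g b) (f a - g a) := by constructor <;> simp <;> linarith
  have i2 : (0 : ℝ) ∈ Set.Icc (f b - g b) (f c - g c) := by constructor <;> simp <;> linarith
  obtain ⟨z1, hz1, hz1e⟩ := intermediate_value_Icc' hab hcont.continuousOn i1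
  obtain ⟨z2, hz2, hz2e⟩ := intermediate_value_Icc hbc hcont.continuousOn i2
  simp only [sub_eq_zero] at hz1e hz2e
  have e1 : f z1 = g z1 := hz1e
  have e2 : f z2 = g z2 := hz2e
  have : z1 = z2 := hsub e1 e2
  have hz1b : z1 ≤ b := hz1.2
  have hz2b : b ≤ z2 := hz2.1
  have : z1 = b := le_antisymm hz1b (this ▸ hz2b)
  rw [this] at e1
  linarith

set_option maxHeartbeats 1000000 in
/-- For a family `F` of pseudo-lines (any two distinct members equal at
most once) and a set `M` of `t` points, the number of equivalence classes of `F` under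
"same strictly-below subset of `M` and same strictly-above subset of `M`" is `O(t²)`. -/
theorem stmt_8 :
    ∃ C : ℕ, 0 < C ∧ ∀ (F : Set (ℝ → ℝ)),
      (∀ f ∈ F, Continuous f) →
      (∀ f ∈ F, ∀ g ∈ F, f ≠ g → {x : ℝ | f x = g x}.Subsingleton) →
      ∀ (M : Finset (ℝ × ℝ)),
        {AB : Set (ℝ × ℝ) × Set (ℝ × ℝ) | ∃ f ∈ F,
            AB.1 = {p : ℝ × ℝ | p ∈ M ∧ p.2 < f p.1} ∧
            AB.2 = {p : ℝ × ℝ | p ∈ M ∧ f p.1 < p.2}}.ncard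
          ≤ C * (M.card ^ 2 + 1) := by
  classical
  refine ⟨3, by norm_num, ?_⟩
  intro F hcont hcross M
  set G : Finset ((ℝ × ℝ) × Bool) := M ×ˢ (Finset.univ : Finset Bool) with hG
  set Sf : (ℝ → ℝ) → Finset ((ℝ × ℝ) × Bool) := fun f =>
    G.filter (fun e => if e.2 = true then e.1.2 < f e.1.1 else ¬ (f e.1.1 < e.1.2)) with hSf
  set 𝒜 : Finset (Finset ((ℝ × ℝ) × Bool)) :=
    G.powerset.filter (fun S => ∃ f ∈ F, S = Sf f) with h𝒜
  set Q : Set (Set (ℝ × ℝ) × Set (ℝ × ℝ)) := {AB | ∃ f ∈ F,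
            AB.1 = {p : ℝ × ℝ | p ∈ M ∧ p.2 < f p.1} ∧
            AB.2 = {p : ℝ × ℝ | p ∈ M ∧ f p.1 < p.2}} with hQ
  -- the encoding map
  set φ : Set (ℝ × ℝ) × Set (ℝ × ℝ) → Finset ((ℝ × ℝ) × Bool) := fun AB =>
    G.filter (fun e => if e.2 = true then e.1 ∈ AB.1 else e.1 ∉ AB.2) with hφ
  have hmemφ : ∀ (X Y : Set (ℝ × ℝ)) (p : ℝ × ℝ) (b : Bool),
      (p, b) ∈ φ (X, Y) ↔ p ∈ M ∧ (if b = true then p ∈ X else p ∉ Y) := by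
    intro X Y p b
    rw [hφ]
    simp [hG]
  -- step 1 : Q.ncard ≤ 𝒜.card
  have step1 : Q.ncard ≤ 𝒜.card := by
    rw [← Set.ncard_coe_finset]
    apply Set.ncard_le_ncard_of_injOn φ
    · rintro ⟨A, B⟩ ⟨f, hfF, hA, hB⟩
      replace hA : A = {p : ℝ × ℝ | p ∈ M ∧ p.2 < f p.1} := hA
      replace hB : B = {p : ℝ × ℝ | p ∈ M ∧ f p.1 < p.2} := hB
      simp only [Finset.mem_coe, h𝒜, Finset.mem_filter, Finset.mem_powerset]
      refine ⟨Finset.filter_subset _ _, f, hfF, ?_⟩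
      apply Finset.filter_congr
      rintro ⟨p, b⟩ heG
      have hM : p ∈ M := by
        rw [hG] at heG
        simpa using (Finset.mem_product.1 heG).1
      cases b <;> simp [hA, hB, hM]
    · rintro ⟨A, B⟩ ⟨f, hfF, hA, hB⟩ ⟨A', B'⟩ ⟨f', hfF', hA', hB'⟩ heq
      replace hA : A = {p : ℝ × ℝ | p ∈ M ∧ p.2 < f p.1} := hA
      replace hB : B = {p : ℝ × ℝ | p ∈ M ∧ f p.1 < p.2} := hB
      replace hA' : A' = {p : ℝ × ℝ | p ∈ M ∧ p.2 < f' p.1} := hA'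
      replace hB' : B' = {p : ℝ × ℝ | p ∈ M ∧ f' p.1 < p.2} := hB'
      have key : ∀ (X Y : Set (ℝ × ℝ)), X ⊆ ↑M → Y ⊆ ↑M →
          (∀ p, p ∈ X ↔ (p, true) ∈ φ (X, Y)) ∧
          (∀ p, p ∈ Y ↔ (p ∈ M ∧ (p, false) ∉ φ (X, Y))) := by
        intro X Y hXM hYM
        constructor
        · intro p
          rw [hmemφ]
          simp only [if_pos rfl]
          exact ⟨fun hp => ⟨Finset.mem_coe.1 (hXM hp), hp⟩, fun hp => hp.2⟩
        · intro p
          rw [hmemφ]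
          simp only [Bool.false_eq_true, if_false]
          constructor
          · intro hp
            have hpM : p ∈ M := Finset.mem_coe.1 (hYM hp)
            exact ⟨hpM, fun h => h.2 hp⟩
          · rintro ⟨hpM, hp⟩
            by_contra hnp
            exact hp ⟨hpM, hnp⟩
      obtain ⟨k1, k2⟩ := key A B (by rw [hA]; intro p hp; exact hp.1)
        (by rw [hB]; intro p hp; exact hp.1)
      obtain ⟨k1', k2'⟩ := key A' B' (by rw [hA']; intro p hp; exact hp.1)
        (by rw [hB']; intro p hp; exact hp.1)
      have hAA : A = A' := by
        ext p; rw [k1, k1', heq]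
      have hBB : B = B' := by
        ext p; rw [k2, k2', heq]
      rw [Prod.mk.injEq]
      exact ⟨hAA, hBB⟩
  -- step 2 : Sauer-Shelah
  have step2 : 𝒜.card ≤ 𝒜.shatterer.card := Finset.card_le_card_shatterer 𝒜
  -- sign lemma
  have sign : ∀ (f g : ℝ → ℝ) (e : (ℝ × ℝ) × Bool), e ∈ Sf f → e ∉ Sf g →
      g e.1.1 < f e.1.1 := by
    intro f g e hef heg
    rw [hSf, Finset.mem_filter] at hef
    have hneg : ¬ (if e.2 = true then e.1.2 < g e.1.1 else ¬ (g e.1.1 < e.1.2)) := by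
      intro h
      apply heg
      rw [hSf, Finset.mem_filter]
      exact ⟨hef.1, h⟩
    have hpos := hef.2
    cases he : e.2 <;> rw [he] at hpos hneg <;> simp at hpos hneg <;> linarith
  -- step 3 : no 3-element set is shattered
  have step3 : 𝒜.shatterer ⊆ G.powerset.filter (fun s => s.card ≤ 2) := by
    intro s hs
    rw [Finset.mem_shatterer] at hs
    have hsG : s ⊆ G := by
      obtain ⟨u, hu, hsu⟩ := hs.exists_superset
      rw [h𝒜, Finset.mem_filter, Finset.mem_powerset] at hu
      exact hsu.trans hu.1
    rw [Finset.mem_filter, Finset.mem_powerset]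
    refine ⟨hsG, ?_⟩
    by_contra hcard
    push_neg at hcard
    rw [Finset.two_lt_card_iff] at hcard
    obtain ⟨a, b, c, ha, hb, hc, hab, hac, hbc⟩ := hcard
    have key : ∀ u v w : (ℝ × ℝ) × Bool, u ∈ s → v ∈ s → w ∈ s →
        u ≠ v → v ≠ w → u.1.1 ≤ v.1.1 → v.1.1 ≤ w.1.1 → False := by
      intro u v w hu hv hw huv hvw hx1 hx2
      obtain ⟨U, hU𝒜, hU⟩ := hs (t := {u, w}) (by
        intro e he
        simp only [Finset.mem_insert, Finset.mem_singleton] at he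
        rcases he with rfl | rfl <;> assumption)
      obtain ⟨V, hV𝒜, hV⟩ := hs (t := {v}) (by
        intro e he
        simp only [Finset.mem_singleton] at he
        subst he; assumption)
      rw [h𝒜, Finset.mem_filter] at hU𝒜 hV𝒜
      obtain ⟨f, hfF, rfl⟩ := hU𝒜.2
      obtain ⟨g, hgF, rfl⟩ := hV𝒜.2
      have huU : u ∈ Sf f := by
        have : u ∈ s ∩ Sf f := by rw [hU]; simp
        exact (Finset.mem_inter.1 this).2
      have hwU : w ∈ Sf f := by
        have : w ∈ s ∩ Sf f := by rw [hU]; simp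
        exact (Finset.mem_inter.1 this).2
      have hvV : v ∈ Sf g := by
        have : v ∈ s ∩ Sf g := by rw [hV]; simp
        exact (Finset.mem_inter.1 this).2
      have hvU : v ∉ Sf f := by
        intro h
        have : v ∈ s ∩ Sf f := Finset.mem_inter.2 ⟨hv, h⟩
        rw [hU] at this
        simp only [Finset.mem_insert, Finset.mem_singleton] at this
        rcases this with rfl | rfl
        · exact huv rfl
        · exact hvw rfl
      have huV : u ∉ Sf g := by
        intro h
        have : u ∈ s ∩ Sf g := Finset.mem_inter.2 ⟨hu, h⟩
        rw [hV] at this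
        simp only [Finset.mem_singleton] at this
        exact huv this
      have hwV : w ∉ Sf g := by
        intro h
        have : w ∈ s ∩ Sf g := Finset.mem_inter.2 ⟨hw, h⟩
        rw [hV] at this
        simp only [Finset.mem_singleton] at this
        exact hvw this.symm
      have hfg : f ≠ g := by
        rintro rfl
        exact hvU hvV
      exact stmt8_ivt (hcont f hfF) (hcont g hgF) (hcross f hfF g hgF hfg) hx1 hx2
        (sign f g u huU huV) (sign g f v hvV hvU) (sign f g w hwU hwV)
    rcases le_total a.1.1 b.1.1 with h1 | h1 <;>
      rcases le_total b.1.1 c.1.1 with h2 | h2 <;>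
      rcases le_total a.1.1 c.1.1 with h3 | h3
    · exact key a b c ha hb hc hab hbc h1 h2
    · exact key a b c ha hb hc hab hbc h1 h2
    · exact key a c b ha hc hb hac hbc.symm h3 h2
    · exact key c a b hc ha hb (Ne.symm hac) hab h3 h1
    · exact key b a c hb ha hc (Ne.symm hab) hac h1 h3
    · exact key b c a hb hc ha hbc (Ne.symm hac) h2 h3
    · exact key c b a hc hb ha (Ne.symm hbc) (Ne.symm hab) h2 h1
    · exact key c b a hc hb ha (Ne.symm hbc) (Ne.symm hab) h2 h1
  -- step 4 : counting
  have hGcard : G.card = 2 * M.card := by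
    rw [hG, Finset.card_product]
    simp [mul_comm]
  have step4 : (G.powerset.filter (fun s => s.card ≤ 2)).card ≤
      Nat.choose (2 * M.card) 0 + Nat.choose (2 * M.card) 1 + Nat.choose (2 * M.card) 2 := by
    have hsub : G.powerset.filter (fun s => s.card ≤ 2) ⊆
        (G.powersetCard 0 ∪ G.powersetCard 1) ∪ G.powersetCard 2 := by
      intro s hsmem
      rw [Finset.mem_filter, Finset.mem_powerset] at hsmem
      obtain ⟨hs1, hs2⟩ := hsmem
      have : s.card = 0 ∨ s.card = 1 ∨ s.card = 2 := by omega
      simp only [Finset.mem_union, Finset.mem_powersetCard]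
      tauto
    have hc1 := Finset.card_union_le (G.powersetCard 0 ∪ G.powersetCard 1) (G.powersetCard 2)
    have hc2 := Finset.card_union_le (G.powersetCard 0) (G.powersetCard 1)
    have hle := Finset.card_le_card hsub
    have e0 : (G.powersetCard 0).card = Nat.choose (2 * M.card) 0 := by
      rw [Finset.card_powersetCard, hGcard]
    have e1 : (G.powersetCard 1).card = Nat.choose (2 * M.card) 1 := by
      rw [Finset.card_powersetCard, hGcard]
    have e2 : (G.powersetCard 2).card = Nat.choose (2 * M.card) 2 := by
      rw [Finset.card_powersetCard, hGcard]
    omega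
  have harith : Nat.choose (2 * M.card) 0 + Nat.choose (2 * M.card) 1 + Nat.choose (2 * M.card) 2
      ≤ 3 * (M.card ^ 2 + 1) := by
    rw [Nat.choose_zero_right, Nat.choose_one_right, Nat.choose_two_right]
    generalize M.card = m
    rcases Nat.eq_zero_or_pos m with hz | hpos
    · rw [hz]; norm_num
    · obtain ⟨n, rfl⟩ : ∃ n, m = n + 1 := ⟨m - 1, by omega⟩
      have hsub : 2 * (n + 1) - 1 = 2 * n + 1 := by omega
      rw [hsub]
      have hdiv : 2 * (n + 1) * (2 * n + 1) / 2 = (n + 1) * (2 * n + 1) := by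
        rw [show 2 * (n + 1) * (2 * n + 1) = 2 * ((n + 1) * (2 * n + 1)) by ring]
        exact Nat.mul_div_cancel_left _ (by norm_num)
      rw [hdiv]
      nlinarith
  exact le_trans step1 (le_trans step2 (le_trans (Finset.card_le_card step3)
    (le_trans step4 harith)))
end
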